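/- Let n = 3 and let r_1, r_2, r_3 > 0 be pairwise distinct. At any parade with signed coordinates x_1 = ±r_1, x_2 = ±r_2, x_3 = r_3, the Hessian matrix of the perimeter L with respect to the reduced coordinates (α_1, α_2) equals the 2×2 matrix [[b_1 + b_2, −b_2], [−b_2, b_2 + b_3]], where b_i = x_{i−1} x_i / |x_{i−1} − x_i| with indices mod 3. -/

import Mathlib

open Real

/-- Length of the chordal segment between points at radii `r`, `r'` whose polar angles
differ by `θ`. -/
noncomputable def ell (r r' θ : ℝ) : ℝ :=
  Real.sqrt (r ^ 2 + r' ^ 2 - 2 * r * r' * Real.cos θ)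

/-- The perimeter of the connecting cycle for three concentric circles of radii
`r1, r2, r3`, as a function of the polar angles `a1, a2` of the first two vertices,
the third angle being fixed to `0`. -/
noncomputable def L3 (r1 r2 r3 : ℝ) (a1 a2 : ℝ) : ℝ :=
  ell r1 r2 (a2 - a1) + ell r2 r3 (0 - a2) + ell r3 r1 (a1 - 0)

/-- Partial derivative in the first variable. -/
noncomputable def pd1 (f : ℝ → ℝ → ℝ) (a b : ℝ) : ℝ := deriv (fun x => f x b) a

/-- Partial derivative in the second variable. -/
noncomputable def pd2 (f : ℝ → ℝ → ℝ) (a b : ℝ) : ℝ := deriv (fun y => f a y) b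

/-- The Hessian matrix of `L3 r1 r2 r3` at `(a, b)` in the reduced coordinates
`(α₁, α₂)`. -/
noncomputable def hess3 (r1 r2 r3 a b : ℝ) : Matrix (Fin 2) (Fin 2) ℝ :=
  !![pd1 (pd1 (L3 r1 r2 r3)) a b, pd1 (pd2 (L3 r1 r2 r3)) a b;
     pd2 (pd1 (L3 r1 r2 r3)) a b, pd2 (pd2 (L3 r1 r2 r3)) a b]

/- ### Auxiliary lemmas -/

lemma qpos {r r' : ℝ} (hr : 0 < r) (hr' : 0 < r') (hne : r ≠ r') (θ : ℝ) :
    0 < r ^ 2 + r' ^ 2 - 2 * r * r' * Real.cos θ := by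
  have h1 : Real.cos θ ≤ 1 := Real.cos_le_one θ
  have h2 : r - r' ≠ 0 := sub_ne_zero.mpr hne
  have h3 : 0 < (r - r') ^ 2 := by positivity
  nlinarith [mul_pos hr hr']

lemma ell_pos {r r' : ℝ} (hr : 0 < r) (hr' : 0 < r') (hne : r ≠ r') (θ : ℝ) :
    0 < ell r r' θ := Real.sqrt_pos.mpr (qpos hr hr' hne θ)

/-- First derivative of `ell` in the angle variable. -/
noncomputable def Dl (r r' θ : ℝ) : ℝ := r * r' * Real.sin θ / ell r r' θ

lemma ell_hasDerivAt {r r' : ℝ} (hr : 0 < r) (hr' : 0 < r') (hne : r ≠ r') (θ : ℝ) :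
    HasDerivAt (fun t => ell r r' t) (Dl r r' θ) θ := by
  have hq := qpos hr hr' hne θ
  have h2 : HasDerivAt (fun t : ℝ => r ^ 2 + r' ^ 2 - 2 * r * r' * Real.cos t)
      (0 - 2 * r * r' * (-Real.sin θ)) θ :=
    (hasDerivAt_const θ (r ^ 2 + r' ^ 2)).sub ((Real.hasDerivAt_cos θ).const_mul (2 * r * r'))
  have h3 := (Real.hasDerivAt_sqrt hq.ne').comp θ h2
  have he : ell r r' θ ≠ 0 := (ell_pos hr hr' hne θ).ne'
  refine h3.congr_deriv ?_
  rw [Dl]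
  have : Real.sqrt (r ^ 2 + r' ^ 2 - 2 * r * r' * Real.cos θ) = ell r r' θ := rfl
  rw [this]
  field_simp
  ring

lemma Dl_hasDerivAt {r r' : ℝ} (hr : 0 < r) (hr' : 0 < r') (hne : r ≠ r') {θ : ℝ}
    (hs : Real.sin θ = 0) :
    HasDerivAt (fun t => Dl r r' t) (r * r' * Real.cos θ / ell r r' θ) θ := by
  have he : ell r r' θ ≠ 0 := (ell_pos hr hr' hne θ).ne'
  have hn : HasDerivAt (fun t : ℝ => r * r' * Real.sin t) (r * r' * Real.cos θ) θ :=
    (Real.hasDerivAt_sin θ).const_mul (r * r')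
  have h := hn.div (ell_hasDerivAt hr hr' hne θ) he
  refine h.congr_deriv ?_
  rw [hs]
  field_simp
  ring

lemma ell_abs {r r' θ : ℝ} (h : Real.cos θ = 1 ∨ Real.cos θ = -1) :
    ell r r' θ = |r - r' * Real.cos θ| := by
  have : r ^ 2 + r' ^ 2 - 2 * r * r' * Real.cos θ = (r - r' * Real.cos θ) ^ 2 := by
    rcases h with h | h <;> rw [h] <;> ring
  rw [ell, this, Real.sqrt_sq_eq_abs]

section
variable {r1 r2 r3 : ℝ} (h1 : 0 < r1) (h2 : 0 < r2) (h3 : 0 < r3)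
  (h12 : r1 ≠ r2) (h23 : r2 ≠ r3) (h13 : r1 ≠ r3)

include h1 h2 h3 h12 h23 h13

omit h23 in
lemma hL3x (x y : ℝ) :
    HasDerivAt (fun x => L3 r1 r2 r3 x y) (-Dl r1 r2 (y - x) + Dl r3 r1 (x - 0)) x := by
  have A : HasDerivAt (fun x : ℝ => ell r1 r2 (y - x)) (Dl r1 r2 (y - x) * (-1)) x :=
    (ell_hasDerivAt h1 h2 h12 (y - x)).comp x ((hasDerivAt_id x).const_sub y)
  have B : HasDerivAt (fun x : ℝ => ell r3 r1 (x - 0)) (Dl r3 r1 (x - 0) * 1) x :=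
    by have := (ell_hasDerivAt h3 h1 (Ne.symm h13) (x - 0)).comp x ((hasDerivAt_id x).sub_const 0); exact this
  have := (A.add (hasDerivAt_const x (ell r2 r3 (0 - y)))).add B
  exact this.congr_deriv (by ring)

omit h13 in
lemma hL3y (x y : ℝ) :
    HasDerivAt (fun y => L3 r1 r2 r3 x y) (Dl r1 r2 (y - x) + -Dl r2 r3 (0 - y)) y := by
  have A : HasDerivAt (fun y : ℝ => ell r1 r2 (y - x)) (Dl r1 r2 (y - x) * 1) y :=
    by have := (ell_hasDerivAt h1 h2 h12 (y - x)).comp y ((hasDerivAt_id y).sub_const x); exact this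
  have B : HasDerivAt (fun y : ℝ => ell r2 r3 (0 - y)) (Dl r2 r3 (0 - y) * (-1)) y :=
    (ell_hasDerivAt h2 h3 h23 (0 - y)).comp y ((hasDerivAt_id y).const_sub 0)
  have := (A.add B).add (hasDerivAt_const y (ell r3 r1 (x - 0)))
  exact this.congr_deriv (by ring)

omit h23 in
lemma pd1_eq (x y : ℝ) :
    pd1 (L3 r1 r2 r3) x y = -Dl r1 r2 (y - x) + Dl r3 r1 (x - 0) :=
  (hL3x h1 h2 h3 h12 h13 x y).deriv

omit h13 in
lemma pd2_eq (x y : ℝ) :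
    pd2 (L3 r1 r2 r3) x y = Dl r1 r2 (y - x) + -Dl r2 r3 (0 - y) :=
  (hL3y h1 h2 h3 h12 h23 x y).deriv

end

lemma abs_congr (A B C : ℝ) (h : B = C ∨ B = -C) : A / |B| = A / |C| := by
  rcases h with rfl | rfl
  · rfl
  · rw [abs_neg]

lemma term_eq (r r' c c' : ℝ) (hc : c = 1 ∨ c = -1) :
    r * r' * (c * c') / |r - r' * (c * c')| = r * c * (r' * c') / |r * c - r' * c'| := by
  rw [show r * r' * (c * c') = r * c * (r' * c') from by ring]
  refine abs_congr _ _ _ ?_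
  rcases hc with rfl | rfl
  · left; ring
  · right; ring

/-- at any parade (angles in `{0, π}`, third vertex fixed at `(r3, 0)`) for
three concentric circles with pairwise distinct positive radii, the Hessian of the
perimeter in the reduced coordinates `(α₁, α₂)` equals
`[[b₁ + b₂, −b₂], [−b₂, b₂ + b₃]]` with `bᵢ = x_{i−1} x_i / |x_{i−1} − x_i|`
(indices mod 3), where `xᵢ = rᵢ cos αᵢ` are the signed coordinates. -/
theorem stmt_5 (r1 r2 r3 : ℝ) (h1 : 0 < r1) (h2 : 0 < r2) (h3 : 0 < r3)
    (h12 : r1 ≠ r2) (h23 : r2 ≠ r3) (h13 : r1 ≠ r3)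
    (a1 a2 : ℝ) (hp1 : a1 = 0 ∨ a1 = π) (hp2 : a2 = 0 ∨ a2 = π) :
    hess3 r1 r2 r3 a1 a2 =
      let x1 := r1 * Real.cos a1
      let x2 := r2 * Real.cos a2
      let x3 := r3
      let b1 := x3 * x1 / |x3 - x1|
      let b2 := x1 * x2 / |x1 - x2|
      let b3 := x2 * x3 / |x2 - x3|
      !![b1 + b2, -b2; -b2, b2 + b3] := by
  have hs1 : Real.sin a1 = 0 := by rcases hp1 with rfl | rfl <;> simp
  have hs2 : Real.sin a2 = 0 := by rcases hp2 with rfl | rfl <;> simp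
  have hc1 : Real.cos a1 = 1 ∨ Real.cos a1 = -1 := by
    rcases hp1 with rfl | rfl <;> simp
  have hc2 : Real.cos a2 = 1 ∨ Real.cos a2 = -1 := by
    rcases hp2 with rfl | rfl <;> simp
  have hs21 : Real.sin (a2 - a1) = 0 := by rw [Real.sin_sub, hs1, hs2]; ring
  have hs10 : Real.sin (a1 - 0) = 0 := by rw [sub_zero]; exact hs1
  have hs02 : Real.sin (0 - a2) = 0 := by rw [zero_sub, Real.sin_neg, hs2, neg_zero]
  have hc21 : Real.cos (a2 - a1) = Real.cos a1 * Real.cos a2 := by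
    rw [Real.cos_sub, hs1, hs2]; ring
  have hc10 : Real.cos (a1 - 0) = Real.cos a1 := by rw [sub_zero]
  have hc02 : Real.cos (0 - a2) = Real.cos a2 := by rw [zero_sub, Real.cos_neg]
  have hc21' : Real.cos (a2 - a1) = 1 ∨ Real.cos (a2 - a1) = -1 := by
    rw [hc21]; rcases hc1 with h | h <;> rcases hc2 with h' | h' <;> rw [h, h'] <;> norm_num
  -- the four second partial derivatives
  have h00 : pd1 (pd1 (L3 r1 r2 r3)) a1 a2 =
      r3 * r1 * Real.cos (a1 - 0) / ell r3 r1 (a1 - 0)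
        + r1 * r2 * Real.cos (a2 - a1) / ell r1 r2 (a2 - a1) := by
    have hfun : (fun x => pd1 (L3 r1 r2 r3) x a2)
        = fun x => -Dl r1 r2 (a2 - x) + Dl r3 r1 (x - 0) :=
      funext fun x => pd1_eq h1 h2 h3 h12 h13 x a2
    rw [pd1, hfun]
    have A : HasDerivAt (fun x : ℝ => Dl r1 r2 (a2 - x))
        ((r1 * r2 * Real.cos (a2 - a1) / ell r1 r2 (a2 - a1)) * (-1)) a1 :=
      (Dl_hasDerivAt h1 h2 h12 hs21).comp a1 ((hasDerivAt_id a1).const_sub a2)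
    have B : HasDerivAt (fun x : ℝ => Dl r3 r1 (x - 0))
        ((r3 * r1 * Real.cos (a1 - 0) / ell r3 r1 (a1 - 0)) * 1) a1 :=
      by have := (Dl_hasDerivAt h3 h1 (Ne.symm h13) hs10).comp a1 ((hasDerivAt_id a1).sub_const 0); exact this
    exact ((A.neg.add B).congr_deriv (by ring)).deriv
  have h01 : pd1 (pd2 (L3 r1 r2 r3)) a1 a2 =
      -(r1 * r2 * Real.cos (a2 - a1) / ell r1 r2 (a2 - a1)) := by
    have hfun : (fun x => pd2 (L3 r1 r2 r3) x a2)
        = fun x => Dl r1 r2 (a2 - x) + -Dl r2 r3 (0 - a2) :=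
      funext fun x => pd2_eq h1 h2 h3 h12 h23 x a2
    rw [pd1, hfun]
    have A : HasDerivAt (fun x : ℝ => Dl r1 r2 (a2 - x))
        ((r1 * r2 * Real.cos (a2 - a1) / ell r1 r2 (a2 - a1)) * (-1)) a1 :=
      (Dl_hasDerivAt h1 h2 h12 hs21).comp a1 ((hasDerivAt_id a1).const_sub a2)
    exact ((A.add (hasDerivAt_const a1 (-Dl r2 r3 (0 - a2)))).congr_deriv (by ring)).deriv
  have h10 : pd2 (pd1 (L3 r1 r2 r3)) a1 a2 =
      -(r1 * r2 * Real.cos (a2 - a1) / ell r1 r2 (a2 - a1)) := by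
    have hfun : (fun y => pd1 (L3 r1 r2 r3) a1 y)
        = fun y => -Dl r1 r2 (y - a1) + Dl r3 r1 (a1 - 0) :=
      funext fun y => pd1_eq h1 h2 h3 h12 h13 a1 y
    rw [pd2, hfun]
    have A : HasDerivAt (fun y : ℝ => Dl r1 r2 (y - a1))
        ((r1 * r2 * Real.cos (a2 - a1) / ell r1 r2 (a2 - a1)) * 1) a2 :=
      by have := (Dl_hasDerivAt h1 h2 h12 hs21).comp a2 ((hasDerivAt_id a2).sub_const a1); exact this
    exact ((A.neg.add (hasDerivAt_const a2 (Dl r3 r1 (a1 - 0)))).congr_deriv (by ring)).deriv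
  have h11 : pd2 (pd2 (L3 r1 r2 r3)) a1 a2 =
      r1 * r2 * Real.cos (a2 - a1) / ell r1 r2 (a2 - a1)
        + r2 * r3 * Real.cos (0 - a2) / ell r2 r3 (0 - a2) := by
    have hfun : (fun y => pd2 (L3 r1 r2 r3) a1 y)
        = fun y => Dl r1 r2 (y - a1) + -Dl r2 r3 (0 - y) :=
      funext fun y => pd2_eq h1 h2 h3 h12 h23 a1 y
    rw [pd2, hfun]
    have A : HasDerivAt (fun y : ℝ => Dl r1 r2 (y - a1))
        ((r1 * r2 * Real.cos (a2 - a1) / ell r1 r2 (a2 - a1)) * 1) a2 :=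
      by have := (Dl_hasDerivAt h1 h2 h12 hs21).comp a2 ((hasDerivAt_id a2).sub_const a1); exact this
    have B : HasDerivAt (fun y : ℝ => Dl r2 r3 (0 - y))
        ((r2 * r3 * Real.cos (0 - a2) / ell r2 r3 (0 - a2)) * (-1)) a2 :=
      (Dl_hasDerivAt h2 h3 h23 hs02).comp a2 ((hasDerivAt_id a2).const_sub 0)
    exact ((A.add B.neg).congr_deriv (by ring)).deriv
  -- the entries in terms of the signed coordinates
  have e12 : r1 * r2 * Real.cos (a2 - a1) / ell r1 r2 (a2 - a1)
      = (r1 * Real.cos a1) * (r2 * Real.cos a2)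
        / |r1 * Real.cos a1 - r2 * Real.cos a2| := by
    rw [ell_abs hc21', hc21]
    exact term_eq r1 r2 (Real.cos a1) (Real.cos a2) hc1
  have e31 : r3 * r1 * Real.cos (a1 - 0) / ell r3 r1 (a1 - 0)
      = r3 * (r1 * Real.cos a1) / |r3 - r1 * Real.cos a1| := by
    rw [ell_abs (hc10 ▸ hc1), hc10, mul_assoc]
  have e23 : r2 * r3 * Real.cos (0 - a2) / ell r2 r3 (0 - a2)
      = (r2 * Real.cos a2) * r3 / |r2 * Real.cos a2 - r3| := by
    rw [ell_abs (hc02 ▸ hc2), hc02]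
    rw [show r2 * r3 * Real.cos a2 = r2 * Real.cos a2 * r3 from by ring]
    refine abs_congr _ _ _ ?_
    rcases hc2 with h | h <;> rw [h]
    · left; ring
    · right; ring
  show _ = !![_,_;_,_]
  rw [hess3, h00, h01, h10, h11, e12, e31, e23]
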